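/- Let M be a symmetric positive definite real n×n matrix and q ∈ ℝⁿ. The map T(x) := (I+M)^{-1}(I−M)|x| − (I+M)^{-1}q is a contraction on ℝⁿ (with respect to the Euclidean norm), and hence has a unique fixed point x*; moreover this x* is the unique zero of F(x) = (M+I)x + (M−I)|x| + q. -/

import Mathlib

open Matrix
open scoped RealInnerProductSpace

private lemma aux_opNNNorm_lt_one {n : ℕ}
    (L : EuclideanSpace ℝ (Fin n) →L[ℝ] EuclideanSpace ℝ (Fin n))
    (h : ∀ v : EuclideanSpace ℝ (Fin n), v ≠ 0 → ‖L v‖ < ‖v‖) : ‖L‖₊ < 1 := by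
  by_cases hn : Nonempty (Fin n)
  · have hsph : (Metric.sphere (0 : EuclideanSpace ℝ (Fin n)) 1).Nonempty := by
      obtain ⟨x, hx⟩ := exists_norm_eq (EuclideanSpace ℝ (Fin n)) (c := 1) one_pos.le
      exact ⟨x, by simpa [Metric.mem_sphere, dist_zero_right] using hx⟩
    have hcpt : IsCompact (Metric.sphere (0 : EuclideanSpace ℝ (Fin n)) 1) :=
      isCompact_sphere _ _
    obtain ⟨v₀, hv₀mem, hmax⟩ := hcpt.exists_isMaxOn hsph
      ((L.continuous.norm).continuousOn)
    have hv₀ : ‖v₀‖ = 1 := by simpa [dist_zero_right] using hv₀mem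
    have hlt : ‖L v₀‖ < 1 := by
      have := h v₀ (by intro h0; simp [h0] at hv₀)
      rwa [hv₀] at this
    have hle : ‖L‖ ≤ ‖L v₀‖ := by
      apply ContinuousLinearMap.opNorm_le_bound _ (norm_nonneg _)
      intro x
      rcases eq_or_ne x 0 with rfl | hx
      · simp
      · have hxs : (‖x‖⁻¹ • x) ∈ Metric.sphere (0 : EuclideanSpace ℝ (Fin n)) 1 := by
          simp [norm_smul, abs_inv, inv_mul_cancel₀ (norm_ne_zero_iff.mpr hx),
            abs_of_nonneg (norm_nonneg x)]
        have hm := hmax hxs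
        simp only [IsMaxOn, Set.mem_setOf_eq, _root_.map_smul, norm_smul, norm_inv,
          norm_norm] at hm ⊢
        calc ‖L x‖ = ‖x‖ * (‖x‖⁻¹ * ‖L x‖) := by
              field_simp [norm_ne_zero_iff.mpr hx]
          _ ≤ ‖x‖ * ‖L v₀‖ := by
              apply mul_le_mul_of_nonneg_left _ (norm_nonneg x)
              simpa [norm_smul] using hm
          _ = ‖L v₀‖ * ‖x‖ := mul_comm _ _
    have : ‖L‖ < 1 := lt_of_le_of_lt hle hlt
    exact_mod_cast this
  · have hx0 : ∀ x : EuclideanSpace ℝ (Fin n), x = 0 := by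
      intro x
      ext i
      exact absurd ⟨i⟩ hn
    have hL0 : L = 0 := ContinuousLinearMap.ext fun x => by rw [hx0 x]; simp
    simp [hL0]

private lemma aux_strict {n : ℕ} (M : Matrix (Fin n) (Fin n) ℝ) (hpd : M.PosDef)
    (v : EuclideanSpace ℝ (Fin n)) (hv : v ≠ 0) :
    ‖toEuclideanLin (1 - M) v‖ < ‖toEuclideanLin (1 + M) v‖ := by
  have hv' : (WithLp.equiv 2 (Fin n → ℝ)) v ≠ 0 := by
    intro h; apply hv; ext i; simpa using congrFun h i
  have hinner : 0 < ⟪v, toEuclideanLin M v⟫ := by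
    have h := hpd.re_dotProduct_pos hv'
    simpa [PiLp.inner_apply, dotProduct, toEuclideanLin_apply, mul_comm] using h
  have hone : toEuclideanLin (1 : Matrix (Fin n) (Fin n) ℝ) v = v := by
    simp [toEuclideanLin_apply]
  have h1 : toEuclideanLin (1 - M) v = v - toEuclideanLin M v := by
    rw [map_sub, LinearMap.sub_apply, hone]
  have h2 : toEuclideanLin (1 + M) v = v + toEuclideanLin M v := by
    rw [map_add, LinearMap.add_apply, hone]
  have hsq : ‖toEuclideanLin (1 - M) v‖ ^ 2 < ‖toEuclideanLin (1 + M) v‖ ^ 2 := by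
    rw [h1, h2, norm_sub_sq_real, norm_add_sq_real]
    linarith
  exact lt_of_pow_lt_pow_left₀ 2 (norm_nonneg _) hsq

theorem stmt_7 {n : ℕ} (M : Matrix (Fin n) (Fin n) ℝ)
    (hsymm : M.IsSymm) (hpd : M.PosDef) (q : Fin n → ℝ) :
    let T : (Fin n → ℝ) → (Fin n → ℝ) :=
      fun x => ((1 + M)⁻¹ * (1 - M)).mulVec (fun i => |x i|) - (1 + M)⁻¹.mulVec q
    (∃ K : NNReal, K < 1 ∧ LipschitzWith K (fun x : EuclideanSpace ℝ (Fin n) =>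
        (WithLp.equiv 2 (Fin n → ℝ)).symm (T (WithLp.equiv 2 (Fin n → ℝ) x)))) ∧
    ∃ xs : Fin n → ℝ, T xs = xs ∧ (∀ y : Fin n → ℝ, T y = y → y = xs) ∧
      ∀ x : Fin n → ℝ,
        ((M + 1).mulVec x + (M - 1).mulVec (fun i => |x i|) + q = 0 ↔ x = xs) := by
  intro T
  have hpd1 : (1 + M).PosDef := Matrix.PosDef.one.add hpd
  have hu : IsUnit (1 + M) := hpd1.isUnit
  have hud : IsUnit (1 + M).det := hpd1.det_pos.ne'.isUnit
  set A : Matrix (Fin n) (Fin n) ℝ := (1 + M)⁻¹ * (1 - M) with hA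
  -- commutation
  have hcomm : A = (1 - M) * (1 + M)⁻¹ := by
    have hc : (1 + M) * (1 - M) = (1 - M) * (1 + M) := by
      rw [Matrix.mul_sub, Matrix.sub_mul, Matrix.mul_one, Matrix.one_mul,
        Matrix.add_mul, Matrix.mul_add, Matrix.mul_one, Matrix.one_mul]
    calc (1 + M)⁻¹ * (1 - M)
        = (1 + M)⁻¹ * ((1 - M) * (1 + M)) * (1 + M)⁻¹ := by
          rw [Matrix.mul_assoc ((1+M)⁻¹), Matrix.mul_assoc, Matrix.mul_nonsing_inv _ hud,
            Matrix.mul_one]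
      _ = (1 - M) * (1 + M)⁻¹ := by
          rw [← hc, ← Matrix.mul_assoc, Matrix.nonsing_inv_mul _ hud, Matrix.one_mul]
  have hMA : (1 + M) * A = 1 - M := by
    rw [hA, ← Matrix.mul_assoc, Matrix.mul_nonsing_inv _ hud, Matrix.one_mul]
  -- the continuous linear map
  set L : EuclideanSpace ℝ (Fin n) →L[ℝ] EuclideanSpace ℝ (Fin n) :=
    LinearMap.toContinuousLinearMap (toEuclideanLin A) with hL
  have hLapp : ∀ v : EuclideanSpace ℝ (Fin n), L v = toEuclideanLin A v := fun _ => rfl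
  -- strict contraction
  have hstrict : ∀ v : EuclideanSpace ℝ (Fin n), v ≠ 0 → ‖L v‖ < ‖v‖ := by
    intro v hv
    set w : EuclideanSpace ℝ (Fin n) := toEuclideanLin (1 + M)⁻¹ v with hw
    have hmulv : ∀ (B C : Matrix (Fin n) (Fin n) ℝ) (u : EuclideanSpace ℝ (Fin n)),
        toEuclideanLin (B * C) u = toEuclideanLin B (toEuclideanLin C u) := by
      intro B C u
      simp [toEuclideanLin_apply, Matrix.mulVec_mulVec]
    have hv_eq : toEuclideanLin (1 + M) w = v := by
      rw [hw, ← hmulv, Matrix.mul_nonsing_inv _ hud]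
      simp [toEuclideanLin_apply]
    have hw0 : w ≠ 0 := by
      intro h0
      rw [h0] at hv_eq
      simp at hv_eq
      exact hv hv_eq.symm
    have hLv : L v = toEuclideanLin (1 - M) w := by
      rw [hLapp, hcomm, hmulv, hw]
    rw [hLv, ← hv_eq]
    exact aux_strict M hpd w hw0
  have hK1 : ‖L‖₊ < 1 := aux_opNNNorm_lt_one L hstrict
  -- the map on EuclideanSpace
  set f : EuclideanSpace ℝ (Fin n) → EuclideanSpace ℝ (Fin n) :=
    fun x => (WithLp.equiv 2 (Fin n → ℝ)).symm (T (WithLp.equiv 2 (Fin n → ℝ) x)) with hf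
  -- Lipschitz
  have habs : LipschitzWith 1 (fun x : EuclideanSpace ℝ (Fin n) =>
      (WithLp.equiv 2 (Fin n → ℝ)).symm (fun i => |(WithLp.equiv 2 (Fin n → ℝ)) x i|)) := by
    apply LipschitzWith.of_dist_le_mul
    intro x y
    rw [NNReal.coe_one, one_mul, dist_eq_norm, dist_eq_norm]
    rw [EuclideanSpace.norm_eq, EuclideanSpace.norm_eq]
    apply Real.sqrt_le_sqrt
    apply Finset.sum_le_sum
    intro i _
    have : |(|x i| - |y i|)| ≤ |x i - y i| := abs_abs_sub_abs_le_abs_sub _ _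
    simp only [WithLp.equiv_symm_apply, WithLp.equiv_apply, PiLp.toLp_apply, PiLp.sub_apply,
      Real.norm_eq_abs]
    calc |(|x i| - |y i|)| ^ 2 ≤ |x i - y i| ^ 2 := by
          apply pow_le_pow_left₀ (abs_nonneg _) this
      _ = |(x - y) i| ^ 2 := by simp
  have hflip : LipschitzWith ‖L‖₊ f := by
    have hc : LipschitzWith 0 (fun _ : EuclideanSpace ℝ (Fin n) =>
        (WithLp.equiv 2 (Fin n → ℝ)).symm ((1 + M)⁻¹.mulVec q)) := LipschitzWith.const _
    have hcomp := (L.lipschitz.comp habs).sub hc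
    have : ‖L‖₊ * 1 + 0 = ‖L‖₊ := by simp
    rw [this] at hcomp
    exact hcomp
  have hcontr : ContractingWith ‖L‖₊ f := ⟨hK1, hflip⟩
  refine ⟨⟨‖L‖₊, hK1, hflip⟩, ?_⟩
  set xs₀ : EuclideanSpace ℝ (Fin n) := ContractingWith.fixedPoint f hcontr with hxs₀
  set xs : Fin n → ℝ := (WithLp.equiv 2 (Fin n → ℝ)) xs₀ with hxs
  have hfix₀ : f xs₀ = xs₀ := ContractingWith.fixedPoint_isFixedPt hcontr
  have hfixT : T xs = xs := by
    have : (WithLp.equiv 2 (Fin n → ℝ)).symm (T xs) = xs₀ := hfix₀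
    calc T xs = (WithLp.equiv 2 (Fin n → ℝ)) ((WithLp.equiv 2 (Fin n → ℝ)).symm (T xs)) :=
          ((WithLp.equiv 2 (Fin n → ℝ)).apply_symm_apply _).symm
      _ = xs := by rw [this]
  have huniq : ∀ y : Fin n → ℝ, T y = y → y = xs := by
    intro y hy
    have hyf : Function.IsFixedPt f ((WithLp.equiv 2 (Fin n → ℝ)).symm y) := by
      show f _ = _
      rw [hf]
      simp only [Equiv.apply_symm_apply]
      rw [hy]
    have := hcontr.fixedPoint_unique' hyf (ContractingWith.fixedPoint_isFixedPt hcontr)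
    calc y = (WithLp.equiv 2 (Fin n → ℝ)) ((WithLp.equiv 2 (Fin n → ℝ)).symm y) :=
          ((WithLp.equiv 2 (Fin n → ℝ)).apply_symm_apply _).symm
      _ = xs := by rw [this]
  refine ⟨xs, hfixT, huniq, ?_⟩
  -- characterize zeros of F
  have hinj : Function.Injective ((1 + M).mulVec) := mulVec_injective_iff_isUnit.mpr hu
  have hTiff : ∀ x : Fin n → ℝ, T x = x ↔ (1 + M) *ᵥ x = (1 - M) *ᵥ (fun i => |x i|) - q := by
    intro x
    constructor
    · intro h
      have := congrArg ((1 + M).mulVec) h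
      rw [show T x = A *ᵥ (fun i => |x i|) - (1 + M)⁻¹ *ᵥ q from rfl] at this
      rw [Matrix.mulVec_sub, Matrix.mulVec_mulVec, Matrix.mulVec_mulVec, hMA,
        Matrix.mul_nonsing_inv _ hud, Matrix.one_mulVec] at this
      exact this.symm
    · intro h
      apply hinj
      rw [show T x = A *ᵥ (fun i => |x i|) - (1 + M)⁻¹ *ᵥ q from rfl]
      rw [Matrix.mulVec_sub, Matrix.mulVec_mulVec, Matrix.mulVec_mulVec, hMA,
        Matrix.mul_nonsing_inv _ hud, Matrix.one_mulVec, h]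
  have hFiff : ∀ x : Fin n → ℝ,
      ((M + 1) *ᵥ x + (M - 1) *ᵥ (fun i => |x i|) + q = 0) ↔ T x = x := by
    intro x
    rw [hTiff]
    rw [Matrix.add_mulVec, Matrix.sub_mulVec, Matrix.sub_mulVec, Matrix.add_mulVec,
      Matrix.one_mulVec]
    constructor
    · intro h
      funext i
      have := congrFun h i
      simp only [Pi.add_apply, Pi.sub_apply, Pi.zero_apply] at this ⊢
      linarith
    · intro h
      funext i
      have := congrFun h i
      simp only [Pi.add_apply, Pi.sub_apply, Pi.zero_apply] at this ⊢
      linarith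
  intro x
  rw [hFiff]
  constructor
  · exact fun h => huniq x h
  · intro h; rw [h]; exact hfixT
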